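/- (Success probability of the anonymous entanglement protocol.) Let n ≥ 2 and let s, r ∈ Fin n be distinct. Under the n-qubit W state ψ_W, the total Born-rule probability of measurement outcomes x satisfying x_j = 0 for all j ∉ {s, r} (i.e., all n−2 measuring agents obtain outcome 0) equals 2/n: Σ_{x : x_j = 0 for all j ∉ {s,r}} |ψ_W(x)|² = 2/n. -/

import Mathlib

/-- Hamming weight of a bitstring. -/
def hammingWt {n : ℕ} (x : Fin n → ZMod 2) : ℕ :=
  (Finset.univ.filter fun i => x i = 1).card

/-- The `n`-qubit W state: amplitude `1/√n` on each Hamming-weight-1 bitstring. -/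
noncomputable def wState (n : ℕ) : EuclideanSpace ℂ (Fin n → ZMod 2) :=
  WithLp.toLp 2 (fun x => if hammingWt x = 1 then ((1 / Real.sqrt n : ℝ) : ℂ) else 0)

/-- Indicator bitstring of a set of qubits. -/
def chi {n : ℕ} (S : Finset (Fin n)) : Fin n → ZMod 2 :=
  fun i => if i ∈ S then 1 else 0

/-- Pauli-X flip on the qubits in `S`. -/
noncomputable def pauliX {n : ℕ} (S : Finset (Fin n))
    (ψ : EuclideanSpace ℂ (Fin n → ZMod 2)) : EuclideanSpace ℂ (Fin n → ZMod 2) :=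
  WithLp.toLp 2 (fun x => ψ (x + chi S))

/-- Bitstring with a single 1 in position `i`. -/
def eVec {n : ℕ} (i : Fin n) : Fin n → ZMod 2 :=
  fun j => if j = i then 1 else 0

lemma hammingWt_eVec {n : ℕ} (i : Fin n) : hammingWt (eVec i) = 1 := by
  unfold hammingWt eVec
  have : (Finset.univ.filter fun j : Fin n => (if j = i then (1 : ZMod 2) else 0) = 1) = {i} := by
    ext j
    simp only [Finset.mem_filter, Finset.mem_univ, true_and, Finset.mem_singleton]
    by_cases h : j = i <;> simp [h]
  rw [this, Finset.card_singleton]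

lemma zmod2_cases (a : ZMod 2) : a = 0 ∨ a = 1 := by revert a; decide

lemma wt_one_eq {n : ℕ} (x : Fin n → ZMod 2) (hw : hammingWt x = 1)
    (s r : Fin n) (hx : ∀ j, j ≠ s → j ≠ r → x j = 0) :
    x = eVec s ∨ x = eVec r := by
  obtain ⟨i, hi⟩ := Finset.card_eq_one.mp hw
  have hmem : ∀ j, x j = 1 ↔ j = i := by
    intro j
    constructor
    · intro h
      have : j ∈ ({i} : Finset (Fin n)) := by
        rw [← hi]; simp [h]
      simpa using this
    · intro h
      have : i ∈ ({i} : Finset (Fin n)) := Finset.mem_singleton_self i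
      rw [← hi] at this
      simp only [Finset.mem_filter] at this
      rw [h]; exact this.2
  have hxi : x i = 1 := (hmem i).mpr rfl
  have hval : ∀ j, x j = if j = i then 1 else 0 := by
    intro j
    by_cases h : j = i
    · simp [h, hxi]
    · simp only [h, if_neg h]
      rcases zmod2_cases (x j) with h0 | h1
      · exact h0
      · exact absurd ((hmem j).mp h1) h
  have his : i = s ∨ i = r := by
    by_contra hc
    push_neg at hc
    exact absurd (hx i hc.1 hc.2) (by rw [hxi]; decide)
  rcases his with h | h
  · left; funext j; rw [hval j, ← h]; rfl
  · right; funext j; rw [hval j, ← h]; rfl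

theorem stmt7 (n : ℕ) (hn : 2 ≤ n) (s r : Fin n) (hsr : s ≠ r) :
    ∑ x ∈ Finset.univ.filter
        (fun x : Fin n → ZMod 2 => ∀ j, j ≠ s → j ≠ r → x j = 0),
      ‖wState n x‖ ^ 2 = (2 : ℝ) / n := by
  have hnpos : (0 : ℝ) < n := by positivity
  have hes : eVec s ≠ eVec r := by
    intro h
    have := congrFun h s
    simp [eVec, hsr] at this
  have hsub : ({eVec s, eVec r} : Finset (Fin n → ZMod 2)) ⊆
      Finset.univ.filter (fun x : Fin n → ZMod 2 => ∀ j, j ≠ s → j ≠ r → x j = 0) := by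
    intro x hx
    simp only [Finset.mem_insert, Finset.mem_singleton] at hx
    simp only [Finset.mem_filter, Finset.mem_univ, true_and]
    rcases hx with rfl | rfl <;> intro j hjs hjr <;> simp [eVec, hjs, hjr]
  rw [← Finset.sum_subset hsub]
  · have hterm : ∀ i : Fin n, ‖wState n (eVec i)‖ ^ 2 = 1 / n := by
      intro i
      simp [wState, hammingWt_eVec, Complex.norm_real, Real.norm_eq_abs, sq_abs, div_pow,
        Real.sq_sqrt hnpos.le]
    rw [Finset.sum_pair hes, hterm, hterm]
    ring
  · intro x hx hnot
    simp only [Finset.mem_filter, Finset.mem_univ, true_and] at hx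
    simp only [Finset.mem_insert, Finset.mem_singleton] at hnot
    push_neg at hnot
    have : wState n x = 0 := by
      unfold wState
      by_cases hw : hammingWt x = 1
      · rcases wt_one_eq x hw s r hx with h | h
        · exact absurd h hnot.1
        · exact absurd h hnot.2
      · simp [hw]
    rw [this]; simp
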